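/- Let φ and ψ be modal CNF formulas, let σ̄ = ⟨σ₁,…,σₙ⟩ be a consistent permutation sequence with each σᵢ of finite order, and let C be a class of pointed Kripke models closed under trees such that C ∩ C_Tree is closed under σ̄. If σ̄ is a layered symmetry of φ (σ̄(φ) = φ), then φ ⊨_C ψ if and only if φ ⊨_C σ̄(ψ). -/

import Mathlib

namespace ModalSym

inductive Lit (Atom : Type) : Type
  | pos (a : Atom) : Lit Atom
  | neg (a : Atom) : Lit Atom
  deriving DecidableEq

namespace Lit
def flip {Atom : Type} : Lit Atom → Lit Atom
  | pos a => neg a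
  | neg a => pos a
def atom {Atom : Type} : Lit Atom → Atom
  | pos a => a
  | neg a => a
end Lit

/-- A permutation `σ` of literals is consistent when it commutes with negation. -/
def Consistent {Atom : Type} (σ : Lit Atom → Lit Atom) : Prop :=
  ∀ l, σ l.flip = (σ l).flip

/-- Modal CNF clauses of modal depth at most `n`: a clause is a finite set whose
elements are literals or modal literals `□ₘ C` / `¬□ₘ C` (`Bool` gives the polarity,
`true` for `□ₘ C`). -/
@[reducible] def ClauseT (Atom Mod : Type) : ℕ → Type
  | 0 => Finset (Lit Atom)
  | n+1 => Finset (Lit Atom ⊕ Bool × Mod × ClauseT Atom Mod n)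

instance instDecEqClauseT {Atom Mod : Type} [DecidableEq Atom] [DecidableEq Mod] :
    ∀ n, DecidableEq (ClauseT Atom Mod n)
  | 0 => inferInstanceAs (DecidableEq (Finset (Lit Atom)))
  | n+1 =>
    letI := instDecEqClauseT (Atom := Atom) (Mod := Mod) n
    inferInstanceAs (DecidableEq (Finset (Lit Atom ⊕ Bool × Mod × ClauseT Atom Mod n)))

/-- A modal CNF formula (of modal depth at most `n`): a finite set of clauses. -/
@[reducible] def FormT (Atom Mod : Type) (n : ℕ) : Type := Finset (ClauseT Atom Mod n)

/-- A pointed Kripke model. -/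
structure KModel (Atom Mod : Type) : Type 1 where
  W : Type
  pt : W
  V : W → Set Atom
  R : Mod → W → W → Prop

def satLit {Atom : Type} (S : Set Atom) : Lit Atom → Prop
  | .pos a => a ∈ S
  | .neg a => a ∉ S

def satClause {Atom Mod : Type} (M : KModel Atom Mod) :
    ∀ n, ClauseT Atom Mod n → M.W → Prop
  | 0, C, v => ∃ l ∈ C, satLit (M.V v) l
  | n+1, C, v => ∃ e ∈ C,
      match e with
      | Sum.inl l => satLit (M.V v) l
      | Sum.inr (b, m, C') =>
          cond b (∀ u, M.R m v u → satClause M n C' u)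
                 (¬ ∀ u, M.R m v u → satClause M n C' u)

/-- `M ⊨ φ`. -/
def satForm {Atom Mod : Type} (M : KModel Atom Mod) {n : ℕ} (φ : FormT Atom Mod n) : Prop :=
  ∀ C ∈ φ, satClause M n C M.pt

/-- `L_S`, the complete consistent set of literals generated by `S ⊆ Atom`. -/
def genLits {Atom : Type} (S : Set Atom) : Set (Lit Atom) := {l | satLit S l}

def permClause {Atom Mod : Type} [DecidableEq Atom] [DecidableEq Mod]
    (σ : Lit Atom → Lit Atom) : ∀ n, ClauseT Atom Mod n → ClauseT Atom Mod n
  | 0, C => C.image σ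
  | n+1, C => C.image fun e =>
      match e with
      | Sum.inl l => Sum.inl (σ l)
      | Sum.inr (b, m, C') => Sum.inr (b, m, permClause σ n C')

/-- The action `σ(φ)` of a permutation of literals on a modal CNF formula. -/
def permForm {Atom Mod : Type} [DecidableEq Atom] [DecidableEq Mod]
    (σ : Lit Atom → Lit Atom) {n : ℕ} (φ : FormT Atom Mod n) : FormT Atom Mod n :=
  φ.image (permClause σ n)

/-- The permuted model `σ(M)`, with `V'(v) = σ(L_{V(v)}) ∩ Atom`. -/
def permModel {Atom Mod : Type} (σ : Lit Atom → Lit Atom) (M : KModel Atom Mod) :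
    KModel Atom Mod where
  W := M.W
  pt := M.pt
  V := fun v => {a | Lit.pos a ∈ σ '' genLits (M.V v)}
  R := M.R

def IsBisim {Atom Mod : Type} (M M' : KModel Atom Mod) (Z : M.W → M'.W → Prop) : Prop :=
  Z M.pt M'.pt ∧
  (∀ v v', Z v v' → ∀ a, a ∈ M.V v ↔ a ∈ M'.V v') ∧
  (∀ v v' m u, Z v v' → M.R m v u → ∃ u', M'.R m v' u' ∧ Z u u') ∧
  (∀ v v' m u', Z v v' → M'.R m v' u' → ∃ u, M.R m v u ∧ Z u u')

def Bisimilar {Atom Mod : Type} (M M' : KModel Atom Mod) : Prop := ∃ Z, IsBisim M M' Z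

def IsSigmaSim {Atom Mod : Type} (σ : Lit Atom → Lit Atom) (M M' : KModel Atom Mod)
    (Z : M.W → M'.W → Prop) : Prop :=
  Z M.pt M'.pt ∧
  (∀ v v', Z v v' → ∀ l, l ∈ genLits (M.V v) ↔ σ l ∈ genLits (M'.V v')) ∧
  (∀ v v' m u, Z v v' → M.R m v u → ∃ u', M'.R m v' u' ∧ Z u u') ∧
  (∀ v v' m u', Z v v' → M'.R m v' u' → ∃ u, M.R m v u ∧ Z u u')

/-- `M ,→σ M'`. -/
def SigmaSim {Atom Mod : Type} (σ : Lit Atom → Lit Atom) (M M' : KModel Atom Mod) : Prop :=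
  ∃ Z, IsSigmaSim σ M M' Z

/-- `IsPathFrom M v p`: `p` is a valid path (list of (modality, state) steps) starting at `v`. -/
def IsPathFrom {Atom Mod : Type} (M : KModel Atom Mod) : M.W → List (Mod × M.W) → Prop
  | _, [] => True
  | v, s :: rest => M.R s.1 v s.2 ∧ IsPathFrom M s.2 rest

def pathLast {Atom Mod : Type} (M : KModel Atom Mod) : M.W → List (Mod × M.W) → M.W
  | v, [] => v
  | _, s :: rest => pathLast M s.2 rest

/-- A tree model: every state is the last state of exactly one rooted path. -/
def IsTree {Atom Mod : Type} (M : KModel Atom Mod) : Prop :=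
  ∀ v : M.W, ∃! p : List (Mod × M.W), IsPathFrom M M.pt p ∧ pathLast M M.pt p = v

/-- The depth of a state: the (minimal) length of a rooted path leading to it. -/
noncomputable def depth {Atom Mod : Type} (M : KModel Atom Mod) (v : M.W) : ℕ :=
  sInf {d | ∃ p, IsPathFrom M M.pt p ∧ pathLast M M.pt p = v ∧ p.length = d}

/-- The unravelling `T(M)`. -/
def unravel {Atom Mod : Type} (M : KModel Atom Mod) : KModel Atom Mod where
  W := {p : List (Mod × M.W) // IsPathFrom M M.pt p}
  pt := ⟨[], trivial⟩
  V := fun p => M.V (pathLast M M.pt p.1)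
  R := fun m p p' => ∃ v, p'.1 = p.1 ++ [(m, v)]

/-- `head(σ̄)`: the first permutation of the sequence, identity for the empty sequence. -/
def headP {Atom : Type} (σs : List (Lit Atom → Lit Atom)) : Lit Atom → Lit Atom :=
  σs.headD id

def lpermClause {Atom Mod : Type} [DecidableEq Atom] [DecidableEq Mod]
    (σs : List (Lit Atom → Lit Atom)) : ∀ n, ClauseT Atom Mod n → ClauseT Atom Mod n
  | 0, C => C.image (headP σs)
  | n+1, C => C.image fun e =>
      match e with
      | Sum.inl l => Sum.inl (headP σs l)
      | Sum.inr (b, m, C') => Sum.inr (b, m, lpermClause σs.tail n C')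

/-- The action `σ̄(φ)` of a permutation sequence on a modal CNF formula. -/
def lpermForm {Atom Mod : Type} [DecidableEq Atom] [DecidableEq Mod]
    (σs : List (Lit Atom → Lit Atom)) {n : ℕ} (φ : FormT Atom Mod n) : FormT Atom Mod n :=
  φ.image (lpermClause σs n)

/-- The layered permuted model `σ̄(M)` (meaningful on tree models):
at a state of depth `d` the permutation `head(σ̄_{d+1})` is used. -/
noncomputable def lpermModel {Atom Mod : Type} (σs : List (Lit Atom → Lit Atom))
    (M : KModel Atom Mod) : KModel Atom Mod where
  W := M.W
  pt := M.pt
  V := fun v => {a | Lit.pos a ∈ headP (σs.drop (depth M v)) '' genLits (M.V v)}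
  R := M.R

def IsLSim {Atom Mod : Type} (σs : List (Lit Atom → Lit Atom)) (M M' : KModel Atom Mod)
    (Z : ℕ → M.W → M'.W → Prop) : Prop :=
  Z 0 M.pt M'.pt ∧
  (∀ i v v', Z i v v' →
    ∀ l, l ∈ genLits (M.V v) ↔ headP (σs.drop i) l ∈ genLits (M'.V v')) ∧
  (∀ i v v' m u, Z i v v' → M.R m v u → ∃ u', M'.R m v' u' ∧ Z (i+1) u u') ∧
  (∀ i v v' m u', Z i v v' → M'.R m v' u' → ∃ u, M.R m v u ∧ Z (i+1) u u')

/-- `M ,→σ̄ M'`. -/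
def LSim {Atom Mod : Type} (σs : List (Lit Atom → Lit Atom)) (M M' : KModel Atom Mod) : Prop :=
  ∃ Z, IsLSim σs M M' Z

/-- `Mod_C(φ)`: the models in the class `𝒞` satisfying `φ`. -/
def ModC {Atom Mod : Type} (𝒞 : Set (KModel Atom Mod)) {n : ℕ} (φ : FormT Atom Mod n) :
    Set (KModel Atom Mod) := {M ∈ 𝒞 | satForm M φ}

/-- `φ ⊨_C ψ`. -/
def Entails {Atom Mod : Type} (𝒞 : Set (KModel Atom Mod)) {n₁ n₂ : ℕ}
    (φ : FormT Atom Mod n₁) (ψ : FormT Atom Mod n₂) : Prop :=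
  ModC 𝒞 φ ⊆ ModC 𝒞 ψ


section Aux
set_option linter.unusedSectionVars false
variable {Atom Mod : Type} [DecidableEq Atom] [DecidableEq Mod]

/-! ### Literals and generated literal sets -/

lemma satLit_flip (S : Set Atom) (l : Lit Atom) : satLit S l.flip ↔ ¬ satLit S l := by
  cases l <;> simp [satLit, Lit.flip]

lemma satLit_perm {σ : Lit Atom → Lit Atom} (hb : Function.Bijective σ)
    (hc : Consistent σ) (S : Set Atom) (l : Lit Atom) :
    satLit {a | Lit.pos a ∈ σ '' genLits S} (σ l) ↔ satLit S l := by
  cases h : σ l with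
  | pos a =>
    show (a ∈ {a | Lit.pos a ∈ σ '' genLits S}) ↔ _
    rw [Set.mem_setOf_eq, ← h, hb.injective.mem_set_image]
    rfl
  | neg a =>
    show (a ∉ {a | Lit.pos a ∈ σ '' genLits S}) ↔ _
    have hpa : Lit.pos a = σ l.flip := by rw [hc l, h]; rfl
    rw [Set.mem_setOf_eq, hpa, hb.injective.mem_set_image]
    show ¬ satLit S l.flip ↔ _
    rw [satLit_flip, not_not]

lemma genLits_perm {σ : Lit Atom → Lit Atom} (hb : Function.Bijective σ)
    (hc : Consistent σ) (S : Set Atom) :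
    genLits {a | Lit.pos a ∈ σ '' genLits S} = σ '' genLits S := by
  ext x
  obtain ⟨l, rfl⟩ := hb.surjective x
  rw [hb.injective.mem_set_image]
  exact satLit_perm hb hc S l

/-! ### headP -/

lemma headP_prop {P : (Lit Atom → Lit Atom) → Prop} (hid : P id)
    {σs : List (Lit Atom → Lit Atom)} (h : ∀ σ ∈ σs, P σ) (i : ℕ) :
    P (headP (σs.drop i)) := by
  rcases hd : σs.drop i with _ | ⟨σ, rest⟩
  · exact hid
  · have : σ ∈ σs := List.mem_of_mem_drop (by rw [hd]; exact List.mem_cons_self)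
    exact h σ this

/-! ### Frame-preserving model surgery -/

/-- Replace the valuation of a model. -/
def replaceV (M : KModel Atom Mod) (V : M.W → Set Atom) : KModel Atom Mod :=
  ⟨M.W, M.pt, V, M.R⟩

variable {M : KModel Atom Mod}

lemma isPathFrom_replaceV (V : M.W → Set Atom) (v : M.W) (p : List (Mod × M.W)) :
    IsPathFrom (replaceV M V) v p ↔ IsPathFrom M v p := by
  induction p generalizing v with
  | nil => exact Iff.rfl
  | cons s rest ih =>
    show M.R s.1 v s.2 ∧ IsPathFrom (replaceV M V) s.2 rest ↔
      M.R s.1 v s.2 ∧ IsPathFrom M s.2 rest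
    exact and_congr Iff.rfl (ih s.2)

lemma pathLast_replaceV (V : M.W → Set Atom) (v : M.W) (p : List (Mod × M.W)) :
    pathLast (replaceV M V) v p = pathLast M v p := by
  induction p generalizing v with
  | nil => rfl
  | cons s rest ih => exact ih s.2

lemma depth_replaceV (V : M.W → Set Atom) (v : M.W) :
    depth (replaceV M V) v = depth M v := by
  unfold depth
  congr 1
  ext d
  simp only [Set.mem_setOf_eq]
  constructor
  · rintro ⟨p, h1, h2, h3⟩
    exact ⟨p, (isPathFrom_replaceV V _ p).1 h1, by exact (pathLast_replaceV V M.pt p).symm.trans h2, h3⟩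
  · rintro ⟨p, h1, h2, h3⟩
    exact ⟨p, (isPathFrom_replaceV V _ p).2 h1, by exact (pathLast_replaceV V M.pt p).trans h2, h3⟩

lemma isTree_replaceV (V : M.W → Set Atom) : IsTree (replaceV M V) ↔ IsTree M := by
  unfold IsTree
  apply forall_congr'
  intro v
  unfold ExistsUnique
  simp only [isPathFrom_replaceV, pathLast_replaceV]
  exact ⟨fun ⟨p, ⟨h1, h2⟩, h3⟩ => ⟨p, ⟨(isPathFrom_replaceV V M.pt p).1 h1,
      (pathLast_replaceV V M.pt p).symm.trans h2⟩, fun y hy => h3 y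
      ⟨(isPathFrom_replaceV V M.pt y).2 hy.1, (pathLast_replaceV V M.pt y).trans hy.2⟩⟩,
    fun ⟨p, ⟨h1, h2⟩, h3⟩ => ⟨p, ⟨(isPathFrom_replaceV V M.pt p).2 h1,
      (pathLast_replaceV V M.pt p).trans h2⟩, fun y hy => h3 y
      ⟨(isPathFrom_replaceV V M.pt y).1 hy.1, (pathLast_replaceV V M.pt y).symm.trans hy.2⟩⟩⟩

/-- The layered permutation acting on a valuation of `M`. -/
noncomputable def pv (σs : List (Lit Atom → Lit Atom)) (M : KModel Atom Mod)
    (V : M.W → Set Atom) : M.W → Set Atom :=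
  fun v => {a | Lit.pos a ∈ headP (σs.drop (depth M v)) '' genLits (V v)}

lemma lpermModel_replaceV (σs : List (Lit Atom → Lit Atom)) (V : M.W → Set Atom) :
    lpermModel σs (replaceV M V) = replaceV M (pv σs M V) := by
  show replaceV M (fun v => {a | Lit.pos a ∈ headP (σs.drop (depth (replaceV M V) v)) ''
      genLits (V v)}) = replaceV M (pv σs M V)
  refine congrArg (replaceV M) (funext fun v => ?_)
  rw [depth_replaceV]
  rfl

/-! ### Paths and depths in trees -/

lemma isPathFrom_append (v : M.W) (p : List (Mod × M.W)) (s : Mod × M.W) :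
    IsPathFrom M v (p ++ [s]) ↔ IsPathFrom M v p ∧ M.R s.1 (pathLast M v p) s.2 := by
  induction p generalizing v with
  | nil => simp [IsPathFrom, pathLast]
  | cons t rest ih =>
    show M.R t.1 v t.2 ∧ IsPathFrom M t.2 (rest ++ [s]) ↔ _
    rw [ih t.2]
    show _ ↔ (M.R t.1 v t.2 ∧ IsPathFrom M t.2 rest) ∧ _
    tauto

lemma pathLast_append (v : M.W) (p : List (Mod × M.W)) (s : Mod × M.W) :
    pathLast M v (p ++ [s]) = s.2 := by
  induction p generalizing v with
  | nil => rfl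
  | cons t rest ih => exact ih t.2

lemma tree_depth (hT : IsTree M) {v : M.W} {p : List (Mod × M.W)}
    (h1 : IsPathFrom M M.pt p) (h2 : pathLast M M.pt p = v) :
    depth M v = p.length := by
  unfold depth
  have hset : {d | ∃ q, IsPathFrom M M.pt q ∧ pathLast M M.pt q = v ∧ q.length = d}
      = {p.length} := by
    ext d
    simp only [Set.mem_setOf_eq, Set.mem_singleton_iff]
    constructor
    · rintro ⟨q, hq1, hq2, rfl⟩
      obtain ⟨r, -, hr⟩ := hT v
      rw [hr q ⟨hq1, hq2⟩, ← hr p ⟨h1, h2⟩]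
    · rintro rfl; exact ⟨p, h1, h2, rfl⟩
  rw [hset, csInf_singleton]

lemma depth_root (hT : IsTree M) : depth M M.pt = 0 :=
  tree_depth hT (p := []) trivial rfl

lemma depth_succ (hT : IsTree M) {m : Mod} {v u : M.W} (h : M.R m v u) :
    depth M u = depth M v + 1 := by
  obtain ⟨p, ⟨hp1, hp2⟩, -⟩ := hT v
  have hq1 : IsPathFrom M M.pt (p ++ [(m, u)]) :=
    (isPathFrom_append M.pt p (m, u)).2 ⟨hp1, by rw [hp2]; exact h⟩
  have hq2 : pathLast M M.pt (p ++ [(m, u)]) = u := pathLast_append M.pt p (m, u)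
  rw [tree_depth hT hq1 hq2, tree_depth hT hp1 hp2, List.length_append, List.length_cons,
    List.length_nil]

/-! ### Satisfaction transfer along the layered permutation -/

lemma satClause_lperm {σs : List (Lit Atom → Lit Atom)}
    (hbij : ∀ σ ∈ σs, Function.Bijective σ) (hcons : ∀ σ ∈ σs, Consistent σ)
    (hT : IsTree M) :
    ∀ n (C : ClauseT Atom Mod n) (v : M.W) (i : ℕ), depth M v = i →
      (satClause (lpermModel σs M) n (lpermClause (σs.drop i) n C) v ↔ satClause M n C v) := by
  have hB : ∀ i, Function.Bijective (headP (σs.drop i)) :=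
    headP_prop Function.bijective_id hbij
  have hC : ∀ i, Consistent (headP (σs.drop i)) :=
    headP_prop (fun l => rfl) hcons
  intro n
  induction n with
  | zero =>
    intro C v i hdv
    show (∃ l ∈ C.image (headP (σs.drop i)), satLit ((lpermModel σs M).V v) l) ↔ _
    simp only [Finset.mem_image, exists_exists_and_eq_and]
    refine exists_congr fun l => and_congr_right fun _ => ?_
    show satLit {a | Lit.pos a ∈ headP (σs.drop (depth M v)) '' genLits (M.V v)} _ ↔ _
    rw [hdv]
    exact satLit_perm (hB i) (hC i) (M.V v) l
  | succ n ih =>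
    intro C v i hdv
    show (∃ e ∈ C.image _, _) ↔ _
    simp only [Finset.mem_image, exists_exists_and_eq_and]
    refine exists_congr fun e => and_congr_right fun _ => ?_
    rcases e with l | ⟨b, m, C'⟩
    · show satLit {a | Lit.pos a ∈ headP (σs.drop (depth M v)) '' genLits (M.V v)} _ ↔ _
      rw [hdv]
      exact satLit_perm (hB i) (hC i) (M.V v) l
    · have hsub : (∀ u, M.R m v u →
          satClause (lpermModel σs M) n (lpermClause ((σs.drop i).tail) n C') u) ↔
          (∀ u, M.R m v u → satClause M n C' u) := by
        refine forall_congr' fun u => ?_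
        refine imp_congr_right fun hR => ?_
        rw [List.tail_drop]
        exact ih C' u (i+1) (by rw [depth_succ hT hR, hdv])
      cases b
      · show ¬ _ ↔ ¬ _
        exact not_congr hsub
      · exact hsub

lemma satForm_lperm {σs : List (Lit Atom → Lit Atom)}
    (hbij : ∀ σ ∈ σs, Function.Bijective σ) (hcons : ∀ σ ∈ σs, Consistent σ)
    (hT : IsTree M) {n : ℕ} (ψ : FormT Atom Mod n) :
    satForm (lpermModel σs M) (lpermForm σs ψ) ↔ satForm M ψ := by
  have key : ∀ C : ClauseT Atom Mod n,
      satClause (lpermModel σs M) n (lpermClause σs n C) M.pt ↔ satClause M n C M.pt := by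
    intro C
    have := satClause_lperm hbij hcons hT n C M.pt 0 (depth_root hT)
    rwa [List.drop_zero] at this
  constructor
  · intro h C hC
    exact (key C).1 (h _ (Finset.mem_image_of_mem _ hC))
  · intro h C hC
    obtain ⟨C', hC', rfl⟩ := Finset.mem_image.1 hC
    exact (key C').2 (h C' hC')

/-! ### Bisimulation invariance -/

lemma satClause_bisim {M M' : KModel Atom Mod} {Z : M.W → M'.W → Prop}
    (hZ : IsBisim M M' Z) :
    ∀ n (C : ClauseT Atom Mod n) (v : M.W) (v' : M'.W), Z v v' →
      (satClause M n C v ↔ satClause M' n C v') := by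
  obtain ⟨-, hharm, hzig, hzag⟩ := hZ
  intro n
  induction n with
  | zero =>
    intro C v v' hvv'
    refine exists_congr fun l => and_congr_right fun _ => ?_
    cases l with
    | pos a => exact hharm v v' hvv' a
    | neg a => exact not_congr (hharm v v' hvv' a)
  | succ n ih =>
    intro C v v' hvv'
    refine exists_congr fun e => and_congr_right fun _ => ?_
    rcases e with l | ⟨b, m, C'⟩
    · cases l with
      | pos a => exact hharm v v' hvv' a
      | neg a => exact not_congr (hharm v v' hvv' a)
    · have hsub : (∀ u, M.R m v u → satClause M n C' u) ↔
          (∀ u', M'.R m v' u' → satClause M' n C' u') := by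
        constructor
        · intro h u' hR'
          obtain ⟨u, hR, hu⟩ := hzag v v' m u' hvv' hR'
          exact (ih C' u u' hu).1 (h u hR)
        · intro h u hR
          obtain ⟨u', hR', hu⟩ := hzig v v' m u hvv' hR
          exact (ih C' u u' hu).2 (h u' hR')
      cases b
      · exact not_congr hsub
      · exact hsub

lemma satForm_bisim {M M' : KModel Atom Mod} (h : Bisimilar M M')
    {n : ℕ} (ψ : FormT Atom Mod n) : satForm M ψ ↔ satForm M' ψ := by
  obtain ⟨Z, hZ⟩ := h
  exact forall_congr' fun C => imp_congr_right fun _ =>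
    satClause_bisim hZ n C M.pt M'.pt hZ.1

/-! ### Iterating the layered permutation -/

lemma genLits_pv_iter {σs : List (Lit Atom → Lit Atom)}
    (hbij : ∀ σ ∈ σs, Function.Bijective σ) (hcons : ∀ σ ∈ σs, Consistent σ)
    (V : M.W → Set Atom) (v : M.W) :
    ∀ j, genLits ((pv σs M)^[j] V v) =
      (headP (σs.drop (depth M v)))^[j] '' genLits (V v) := by
  have hB := headP_prop (Atom := Atom) Function.bijective_id hbij
  have hC := headP_prop (Atom := Atom) (fun l => rfl) hcons
  intro j
  induction j with
  | zero => simp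
  | succ j ihj =>
    rw [Function.iterate_succ_apply']
    show genLits {a | Lit.pos a ∈ _ '' genLits ((pv σs M)^[j] V v)} = _
    rw [genLits_perm (hB _) (hC _), ihj, ← Set.image_comp, ← Function.iterate_succ']

lemma pv_iter_fixed {σs : List (Lit Atom → Lit Atom)}
    (hbij : ∀ σ ∈ σs, Function.Bijective σ) (hcons : ∀ σ ∈ σs, Consistent σ)
    {k : ℕ} (hk1 : 1 ≤ k) (hk : ∀ σ ∈ σs, σ^[k] = id) (V : M.W → Set Atom) :
    (pv σs M)^[k] V = V := by
  have hid : ∀ i, (headP (σs.drop i))^[k] = id :=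
    headP_prop (P := fun σ => σ^[k] = id) (Function.iterate_id k) hk
  obtain ⟨j, rfl⟩ : ∃ j, k = j + 1 := ⟨k - 1, by omega⟩
  funext v
  rw [Function.iterate_succ_apply']
  show {a | Lit.pos a ∈ _ '' genLits ((pv σs M)^[j] V v)} = V v
  rw [genLits_pv_iter hbij hcons V v, ← Set.image_comp, ← Function.iterate_succ',
    hid, Set.image_id]
  ext a
  show satLit (V v) (Lit.pos a) ↔ a ∈ V v
  rfl

/-! ### Common finite order -/

lemma exists_common_order {σs : List (Lit Atom → Lit Atom)}
    (hord : ∀ σ ∈ σs, ∃ k : ℕ, 1 ≤ k ∧ σ^[k] = id) :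
    ∃ k : ℕ, 1 ≤ k ∧ ∀ σ ∈ σs, σ^[k] = id := by
  induction σs with
  | nil => exact ⟨1, le_refl 1, by simp⟩
  | cons σ rest ih =>
    obtain ⟨k2, hk2, h2⟩ := ih (fun τ hτ => hord τ (List.mem_cons_of_mem σ hτ))
    obtain ⟨k1, hk1, h1⟩ := hord σ (List.mem_cons_self (a := σ) (l := rest))
    refine ⟨k1 * k2, Nat.one_le_iff_ne_zero.2 (by positivity), ?_⟩
    intro τ hτ
    rcases List.mem_cons.1 hτ with rfl | hτ
    · rw [Function.iterate_mul, h1, Function.iterate_id]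
    · rw [mul_comm, Function.iterate_mul, h2 τ hτ, Function.iterate_id]

end Aux

lemma replaceV_self {Atom Mod : Type} {M : KModel Atom Mod} : replaceV M M.V = M := rfl

/-- layered symmetries preserve entailment: `φ ⊨_𝒞 ψ` iff `φ ⊨_𝒞 σ̄(ψ)`. -/
theorem entails_iff_entails_lperm {Atom Mod : Type} [Countable Atom] [Countable Mod]
    [DecidableEq Atom] [DecidableEq Mod]
    {n₁ n₂ : ℕ} (φ : FormT Atom Mod n₁) (ψ : FormT Atom Mod n₂)
    (σs : List (Lit Atom → Lit Atom))
    (hbij : ∀ σ ∈ σs, Function.Bijective σ) (hcons : ∀ σ ∈ σs, Consistent σ)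
    (hord : ∀ σ ∈ σs, ∃ k : ℕ, 1 ≤ k ∧ σ^[k] = id)
    (𝒞 : Set (KModel Atom Mod))
    (htrees : ∀ M ∈ 𝒞, ∃ T ∈ 𝒞, IsTree T ∧ Bisimilar M T)
    (hclosed : ∀ M ∈ 𝒞, IsTree M → lpermModel σs M ∈ 𝒞)
    (hsym : lpermForm σs φ = φ) :
    Entails 𝒞 φ ψ ↔ Entails 𝒞 φ (lpermForm σs ψ) := by
  constructor
  · intro h M hM
    obtain ⟨hM𝒞, hMφ⟩ := hM
    obtain ⟨T, hT𝒞, hTtree, hbis⟩ := htrees M hM𝒞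
    have hTφ : satForm T φ := (satForm_bisim hbis φ).1 hMφ
    obtain ⟨k, hk1, hk⟩ := exists_common_order hord
    set F : ℕ → KModel Atom Mod := fun j => replaceV T ((pv σs T)^[j] T.V) with hF
    have hFsucc : ∀ j, F (j+1) = lpermModel σs (F j) := by
      intro j
      have h1 : lpermModel σs (F j) = replaceV T (pv σs T ((pv σs T)^[j] T.V)) :=
        lpermModel_replaceV σs _
      show replaceV T ((pv σs T)^[j+1] T.V) = _
      rw [h1, Function.iterate_succ_apply']
    have hFtree : ∀ j, IsTree (F j) := fun j => (isTree_replaceV _).2 hTtree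
    have hFmem : ∀ j, F j ∈ 𝒞 ∧ satForm (F j) φ := by
      intro j
      induction j with
      | zero => exact ⟨hT𝒞, hTφ⟩
      | succ j ih =>
        refine ⟨by rw [hFsucc]; exact hclosed _ ih.1 (hFtree j), ?_⟩
        rw [hFsucc]
        have h2 := satForm_lperm hbij hcons (hFtree j) φ
        rw [hsym] at h2
        exact h2.2 ih.2
    have hψ : satForm (F (k-1)) ψ := (h ⟨(hFmem (k-1)).1, (hFmem (k-1)).2⟩).2
    have hfix : F k = T := by
      rw [hF]
      show replaceV T ((pv σs T)^[k] T.V) = T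
      rw [pv_iter_fixed hbij hcons hk1 hk]
      exact replaceV_self
    have hkk : k - 1 + 1 = k := by omega
    have hTσψ : satForm T (lpermForm σs ψ) := by
      have h3 := (satForm_lperm hbij hcons (hFtree (k-1)) ψ).2 hψ
      rw [← hFsucc, hkk, hfix] at h3
      exact h3
    exact ⟨hM𝒞, (satForm_bisim hbis (lpermForm σs ψ)).2 hTσψ⟩
  · intro h M hM
    obtain ⟨hM𝒞, hMφ⟩ := hM
    obtain ⟨T, hT𝒞, hTtree, hbis⟩ := htrees M hM𝒞
    have hTφ : satForm T φ := (satForm_bisim hbis φ).1 hMφ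
    have hT1φ : satForm (lpermModel σs T) φ := by
      have h2 := satForm_lperm hbij hcons hTtree φ
      rw [hsym] at h2
      exact h2.2 hTφ
    have hσψ : satForm (lpermModel σs T) (lpermForm σs ψ) :=
      (h ⟨hclosed T hT𝒞 hTtree, hT1φ⟩).2
    have hTψ : satForm T ψ := (satForm_lperm hbij hcons hTtree ψ).1 hσψ
    exact ⟨hM𝒞, (satForm_bisim hbis ψ).2 hTψ⟩

end ModalSym
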